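/- Let f : M → M be continuous on a compact metric space, and let ν be the unique f-invariant Borel probability measure (f uniquely ergodic). Suppose I is a nonempty open set with ν(I) > 0, and K := ∪_{j=0}^{p−1} f^j(Ī) satisfies f(K) ⊆ K with K ≠ M, where f^p(Ī) ⊆ I. If f is a homeomorphism of M, we reach a contradiction; that is, a homeomorphism of a compact metric space that admits a periodic shrinking set I with K = ∪_{j=0}^{p−1} f^j(Ī) ≠ M and such that its (putative unique) invariant measure gives I positive mass, is not uniquely ergodic. -/

import Mathlib

open MeasureTheory Filter Topology Metric Set Function
open scoped ENNReal NNReal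

/-- Along an ultrafilter, a sequence in `[0,1]` has a limit. -/
lemma stmt7_ulim_exists (𝒰 : Ultrafilter ℕ) (u : ℕ → ℝ) (h : ∀ n, u n ∈ Set.Icc (0:ℝ) 1) :
    ∃ a ∈ Set.Icc (0:ℝ) 1, Filter.Tendsto u 𝒰 (nhds a) := by
  obtain ⟨a, ha, hle⟩ := (isCompact_Icc (a := (0:ℝ)) (b := 1)).ultrafilter_le_nhds (𝒰.map u)
    (by
      rw [Ultrafilter.coe_map, Filter.le_principal_iff, Filter.mem_map]
      exact Filter.univ_mem' h)
  refine ⟨a, ha, ?_⟩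
  rwa [Ultrafilter.coe_map] at hle

/-- A homeomorphism of a compact metric space admitting a periodic shrinking set `I` whose
orbit `K = ⋃_{j<p} f^j(closure I)` is not all of `M`, and whose (putative unique) invariant
measure gives `I` positive mass, cannot be uniquely ergodic. -/
theorem stmt7 {M : Type*} [MetricSpace M] [CompactSpace M]
    [MeasurableSpace M] [BorelSpace M]
    (f : M → M) (hf : Continuous f) (hbij : Function.Bijective f)
    (ν : Measure M) (hν : IsProbabilityMeasure ν)
    (hinv : MeasurePreserving f ν ν)
    (huniq : ∀ μ : Measure M, IsProbabilityMeasure μ → MeasurePreserving f μ μ → μ = ν)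
    (I : Set M) (hIo : IsOpen I) (hIne : I.Nonempty)
    (p : ℕ) (hp : 1 ≤ p)
    (hdisj : ∀ i j, i < p → j < p → i ≠ j →
      Disjoint (f^[i] '' closure I) (f^[j] '' closure I))
    (hret : f^[p] '' closure I ⊆ I)
    (hK : (⋃ j ∈ Finset.range p, f^[j] '' closure I) ≠ Set.univ)
    (hνI : 0 < ν I) :
    False := by
  classical
  -- the homeomorphism
  let hh : M ≃ₜ M := Continuous.homeoOfEquivCompactToT2 (f := Equiv.ofBijective f hbij) hf
  have hhf : ⇑hh = f := rfl
  -- the forward-invariant compact union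
  set BK : Set M := ⋃ j ∈ Finset.range p, f^[j] '' closure I with hBKdef
  have hIBK : I ⊆ BK := by
    intro x hx
    refine Set.mem_biUnion (Finset.mem_range.mpr hp) ?_
    simpa using subset_closure hx
  have hfBK : ∀ z ∈ BK, f z ∈ BK := by
    intro z hz
    rw [Set.mem_iUnion₂] at hz
    obtain ⟨j, hj, w, hw, rfl⟩ := hz
    rw [Finset.mem_range] at hj
    have hfz : f (f^[j] w) = f^[j+1] w := (Function.iterate_succ_apply' f j w).symm
    rcases lt_or_ge (j+1) p with hlt | hge
    · rw [hfz]
      exact Set.mem_biUnion (Finset.mem_range.mpr hlt) ⟨w, hw, rfl⟩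
    · have hjp : j + 1 = p := le_antisymm (by omega) hge
      have : f^[j+1] w ∈ I := by
        rw [hjp]; exact hret ⟨w, hw, rfl⟩
      rw [hfz]
      exact hIBK this
  -- a point outside BK, with backward orbit staying outside BK
  obtain ⟨x₀, hx₀⟩ : ∃ x, x ∉ BK := by
    by_contra hc
    push_neg at hc
    exact hK (Set.eq_univ_iff_forall.mpr hc)
  set y : ℕ → M := fun k => (hh.symm)^[k] x₀ with hydef
  have hysucc : ∀ k, y (k+1) = hh.symm (y k) := by
    intro k
    simp only [hydef]
    exact Function.iterate_succ_apply' hh.symm k x₀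
  have hyBK : ∀ k, y k ∉ BK := by
    intro k
    induction k with
    | zero => simpa [hydef] using hx₀
    | succ k ih =>
      intro hmem
      rw [hysucc k] at hmem
      have h2 : f (hh.symm (y k)) ∈ BK := hfBK _ hmem
      rw [← hhf, hh.apply_symm_apply (y k)] at h2
      exact ih h2
  -- counting measures along the backward orbit
  set cnt : ℕ → Set M → Finset ℕ := fun n S => (Finset.range n).filter (fun k => y k ∈ S)
    with hcntdef
  set cR : ℕ → Set M → ℝ := fun n S => ((cnt n S).card : ℝ) / n with hcRdef
  have hdivle : ∀ (a b n : ℕ), a ≤ b → (a:ℝ)/n ≤ (b:ℝ)/n := by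
    intro a b n hab
    rcases Nat.eq_zero_or_pos n with h0 | h0
    · simp [h0]
    · have hn : (0:ℝ) < n := by exact_mod_cast h0
      gcongr
  have hcard_le : ∀ n S, (cnt n S).card ≤ n := by
    intro n S
    simpa using Finset.card_filter_le (Finset.range n) _
  have hc01 : ∀ n S, cR n S ∈ Set.Icc (0:ℝ) 1 := by
    intro n S
    constructor
    · apply div_nonneg <;> positivity
    · rcases Nat.eq_zero_or_pos n with h0 | h0
      · simp [hcRdef, h0]
      · have h1 := hdivle _ _ n (hcard_le n S)
        have hne : (n:ℝ) ≠ 0 := by positivity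
        rwa [div_self hne] at h1
  -- the ultrafilter and the limit functional
  set 𝒰 : Ultrafilter ℕ := Filter.hyperfilter ℕ with hUdef
  have hUle : (𝒰 : Filter ℕ) ≤ Filter.atTop := by
    rw [← Nat.cofinite_eq_atTop]
    exact Filter.hyperfilter_le_cofinite
  set lamR : Set M → ℝ := fun S => limUnder (𝒰 : Filter ℕ) (fun n => cR n S) with hlamdef
  have hten : ∀ S : Set M, Filter.Tendsto (fun n => cR n S) 𝒰 (nhds (lamR S)) ∧
      lamR S ∈ Set.Icc (0:ℝ) 1 := by
    intro S
    obtain ⟨a, ha, hta⟩ := stmt7_ulim_exists 𝒰 (fun n => cR n S) (fun n => hc01 n S)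
    have hEq : lamR S = a := hta.limUnder_eq
    rw [hEq]
    exact ⟨hta, ha⟩
  -- basic properties of lamR
  have hlam_mono : ∀ S T : Set M, S ⊆ T → lamR S ≤ lamR T := by
    intro S T hST
    refine le_of_tendsto_of_tendsto' (hten S).1 (hten T).1 (fun n => ?_)
    exact hdivle _ _ n (Finset.card_le_card
      (Finset.monotone_filter_right _ (fun k _ hk => hST hk)))
  have hcnt_union : ∀ (n : ℕ) (S T : Set M), cnt n (S ∪ T) = cnt n S ∪ cnt n T := by
    intro n S T
    simp only [hcntdef, Set.mem_union]
    exact Finset.filter_or _ _ _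
  have hlam_add : ∀ S T : Set M, Disjoint S T → lamR (S ∪ T) = lamR S + lamR T := by
    intro S T hd
    have hpt : ∀ n, cR n (S ∪ T) = cR n S + cR n T := by
      intro n
      have hdisj' : Disjoint (cnt n S) (cnt n T) := by
        rw [Finset.disjoint_filter]
        intro k _ h1 h2
        exact Set.disjoint_left.mp hd h1 h2
      simp only [hcRdef, hcnt_union, Finset.card_union_of_disjoint hdisj', Nat.cast_add, add_div]
    have h1 : Filter.Tendsto (fun n => cR n (S ∪ T)) 𝒰 (nhds (lamR S + lamR T)) := by
      have h2 := (hten S).1.add (hten T).1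
      simpa only [← hpt] using h2
    exact tendsto_nhds_unique (hten (S ∪ T)).1 h1
  have hlam_subadd : ∀ S T : Set M, lamR (S ∪ T) ≤ lamR S + lamR T := by
    intro S T
    refine le_of_tendsto_of_tendsto' (hten (S ∪ T)).1 ((hten S).1.add (hten T).1) (fun n => ?_)
    have h2 := hdivle _ _ n ((hcnt_union n S T) ▸ Finset.card_union_le (cnt n S) (cnt n T))
    rw [Nat.cast_add, add_div] at h2
    exact h2
  -- invariance of lamR under taking images by f
  have hshift_eq : ∀ (n : ℕ) (S : Set M), cnt n (f '' S) =
      (Finset.range n).filter (fun k => y (k+1) ∈ S) := by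
    intro n S
    apply Finset.filter_congr
    intro k _
    constructor
    · rintro ⟨z, hz, hfz⟩
      have hz2 : hh.symm (y k) = z := by
        rw [← hfz, ← hhf]
        exact hh.symm_apply_apply z
      rw [hysucc k, hz2]
      exact hz
    · intro hk
      refine ⟨hh.symm (y k), ?_, ?_⟩
      · rw [← hysucc k]; exact hk
      · rw [← hhf]; exact hh.apply_symm_apply (y k)
  have htend0 : Filter.Tendsto (fun n : ℕ => 1/(n:ℝ)) 𝒰 (nhds 0) :=
    tendsto_one_div_atTop_nhds_zero_nat.mono_left hUle
  have hlam_inv : ∀ S : Set M, lamR (f '' S) = lamR S := by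
    intro S
    set sh : ℕ → Finset ℕ := fun n => (Finset.range n).filter (fun k => y (k+1) ∈ S) with hshdef
    have hshift_le : ∀ n, (sh n).card ≤ (cnt (n+1) S).card := by
      intro n
      have himsub : (sh n).image Nat.succ ⊆ cnt (n+1) S := by
        intro k hk
        simp only [hshdef, Finset.mem_image, Finset.mem_filter, Finset.mem_range] at hk
        obtain ⟨m, hm, rfl⟩ := hk
        simp only [hcntdef, Finset.mem_filter, Finset.mem_range]
        exact ⟨by omega, hm.2⟩
      calc (sh n).card = ((sh n).image Nat.succ).card :=
            (Finset.card_image_of_injective _ Nat.succ_injective).symm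
        _ ≤ (cnt (n+1) S).card := Finset.card_le_card himsub
    have hle_shift : ∀ n, (cnt (n+1) S).card ≤ (sh n).card + 1 := by
      intro n
      have hsub : cnt (n+1) S ⊆ insert 0 ((sh n).image Nat.succ) := by
        intro k hk
        simp only [hcntdef, Finset.mem_filter, Finset.mem_range] at hk
        rcases k with _ | m
        · exact Finset.mem_insert_self _ _
        · apply Finset.mem_insert_of_mem
          simp only [hshdef, Finset.mem_image, Finset.mem_filter, Finset.mem_range]
          exact ⟨m, ⟨by omega, hk.2⟩, rfl⟩
      calc (cnt (n+1) S).card ≤ (insert 0 ((sh n).image Nat.succ)).card :=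
            Finset.card_le_card hsub
        _ ≤ ((sh n).image Nat.succ).card + 1 := Finset.card_insert_le _ _
        _ = (sh n).card + 1 := by
            rw [Finset.card_image_of_injective _ Nat.succ_injective]
    have hmono_card : ∀ n, (cnt n S).card ≤ (cnt (n+1) S).card := by
      intro n
      exact Finset.card_le_card (Finset.filter_subset_filter _
        (Finset.range_subset_range.mpr (by omega)))
    have hcard_succ : ∀ n, (cnt (n+1) S).card ≤ (cnt n S).card + 1 := by
      intro n
      have hsub : cnt (n+1) S ⊆ insert n (cnt n S) := by
        intro k hk
        simp only [hcntdef, Finset.mem_filter, Finset.mem_range] at hk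
        rcases Nat.lt_or_ge k n with hkn | hkn
        · exact Finset.mem_insert_of_mem (by
            simp only [hcntdef, Finset.mem_filter, Finset.mem_range]
            exact ⟨hkn, hk.2⟩)
        · have : k = n := by omega
          rw [this]; exact Finset.mem_insert_self _ _
      exact (Finset.card_le_card hsub).trans (Finset.card_insert_le _ _)
    -- pointwise inequalities
    have hle1 : ∀ n : ℕ, cR n (f '' S) ≤ cR n S + 1/(n:ℝ) := by
      intro n
      have h1 : (cnt n (f '' S)).card ≤ (cnt n S).card + 1 := by
        rw [hshift_eq n S]
        exact (hshift_le n).trans (hcard_succ n)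
      have h2 := hdivle _ _ n h1
      rw [Nat.cast_add, Nat.cast_one, add_div] at h2
      simpa [hcRdef, one_div] using h2
    have hle2 : ∀ n : ℕ, cR n S ≤ cR n (f '' S) + 1/(n:ℝ) := by
      intro n
      have h1 : (cnt n S).card ≤ (cnt n (f '' S)).card + 1 := by
        rw [hshift_eq n S]
        exact (hmono_card n).trans (hle_shift n)
      have h2 := hdivle _ _ n h1
      rw [Nat.cast_add, Nat.cast_one, add_div] at h2
      simpa [hcRdef, one_div] using h2
    have hA : lamR (f '' S) ≤ lamR S := by
      have := le_of_tendsto_of_tendsto' (hten (f '' S)).1 ((hten S).1.add htend0) hle1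
      rwa [add_zero] at this
    have hB : lamR S ≤ lamR (f '' S) := by
      have := le_of_tendsto_of_tendsto' (hten S).1 ((hten (f '' S)).1.add htend0) hle2
      rwa [add_zero] at this
    exact le_antisymm hA hB
  -- lamR of univ is 1
  have hlam_univ : lamR Set.univ = 1 := by
    have hev : ∀ᶠ n in (𝒰 : Filter ℕ), cR n Set.univ = 1 := by
      apply Filter.Eventually.filter_mono hUle
      filter_upwards [Filter.eventually_ge_atTop 1] with n hn
      have hcu : cnt n Set.univ = Finset.range n := by
        simp [hcntdef]
      have hne : (n:ℝ) ≠ 0 := by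
        have : (0:ℝ) < n := by exact_mod_cast hn
        exact ne_of_gt this
      simp [hcRdef, hcu, div_self hne]
    have h1 : Filter.Tendsto (fun n => cR n Set.univ) 𝒰 (nhds 1) :=
      Filter.Tendsto.congr' (Filter.EventuallyEq.symm hev) tendsto_const_nhds
    exact tendsto_nhds_unique (hten Set.univ).1 h1
  -- lamR vanishes on subsets of BK
  have hlam_BK : ∀ S : Set M, S ⊆ BK → lamR S = 0 := by
    intro S hS
    have hpt : ∀ n, cR n S = 0 := by
      intro n
      have : cnt n S = ∅ := by
        apply Finset.filter_false_of_mem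
        intro k _
        exact fun h => hyBK k (hS h)
      simp [hcRdef, this]
    have h1 : Filter.Tendsto (fun n => cR n S) 𝒰 (nhds 0) := by
      simpa only [hpt] using (tendsto_const_nhds : Filter.Tendsto (fun _ : ℕ => (0:ℝ)) 𝒰 _)
    exact tendsto_nhds_unique (hten S).1 h1
  -- build the content
  let C : Content M :=
    { toFun := fun K => Real.toNNReal (lamR K)
      mono' := fun K₁ K₂ h => Real.toNNReal_mono (hlam_mono _ _ h)
      sup_disjoint' := by
        intro K₁ K₂ hd _ _
        show Real.toNNReal (lamR ((K₁ ⊔ K₂ : TopologicalSpace.Compacts M) : Set M)) = _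
        rw [TopologicalSpace.Compacts.coe_sup, hlam_add _ _ hd]
        exact Real.toNNReal_add (hten (K₁ : Set M)).2.1 (hten (K₂ : Set M)).2.1
      sup_le' := by
        intro K₁ K₂
        show Real.toNNReal (lamR ((K₁ ⊔ K₂ : TopologicalSpace.Compacts M) : Set M)) ≤ _
        rw [TopologicalSpace.Compacts.coe_sup]
        calc Real.toNNReal (lamR (↑K₁ ∪ ↑K₂)) ≤ Real.toNNReal (lamR ↑K₁ + lamR ↑K₂) :=
              Real.toNNReal_mono (hlam_subadd _ _)
          _ = _ := Real.toNNReal_add (hten (K₁ : Set M)).2.1 (hten (K₂ : Set M)).2.1 }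
  set μm : Measure M := C.measure with hμmdef
  -- μm is a probability measure
  have hCuniv : (C ⟨Set.univ, isCompact_univ⟩ : ℝ≥0∞) = 1 := by
    show ((Real.toNNReal (lamR Set.univ) : ℝ≥0) : ℝ≥0∞) = 1
    rw [hlam_univ]
    simp
  have hμuniv : μm Set.univ = 1 := by
    rw [hμmdef, C.measure_apply MeasurableSet.univ,
      C.outerMeasure_of_isOpen Set.univ isOpen_univ,
      C.innerContent_of_isCompact isCompact_univ isOpen_univ]
    exact hCuniv
  have hprob : IsProbabilityMeasure μm := ⟨hμuniv⟩
  -- μm is f-invariant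
  have hCinv : ∀ ⦃K : TopologicalSpace.Compacts M⦄,
      (C (K.map hh hh.continuous) : ℝ≥0∞) = C K := by
    intro K
    have hcoe : ((K.map hh hh.continuous : TopologicalSpace.Compacts M) : Set M) = f '' K := by
      rw [← hhf]; rfl
    show ((Real.toNNReal (lamR ((K.map hh hh.continuous : TopologicalSpace.Compacts M) : Set M))
      : ℝ≥0) : ℝ≥0∞) = _
    rw [hcoe, hlam_inv]
    rfl
  have hmp : MeasurePreserving f μm μm := by
    refine ⟨hf.measurable, ?_⟩
    ext s hs
    rw [Measure.map_apply hf.measurable hs, hμmdef,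
      C.measure_apply (hf.measurable hs), C.measure_apply hs]
    have := C.outerMeasure_preimage hh hCinv s
    rwa [hhf] at this
  -- μm gives I zero mass
  have hμI : μm I = 0 := by
    rw [hμmdef, C.measure_apply hIo.measurableSet,
      C.outerMeasure_of_isOpen I hIo]
    refine le_antisymm ?_ zero_le
    rw [Content.innerContent]
    refine iSup₂_le fun K hKI => ?_
    have h0 : lamR (K : Set M) = 0 := hlam_BK _ (hKI.trans hIBK)
    show ((Real.toNNReal (lamR (K : Set M)) : ℝ≥0) : ℝ≥0∞) ≤ 0
    rw [h0]
    simp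
  -- contradiction with unique ergodicity
  have heq := huniq μm hprob hmp
  rw [← heq, hμI] at hνI
  exact lt_irrefl 0 hνI
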